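/- Let F be a field with at least 4 elements. Then every nonscalar matrix in SL_2(F) is a product of at most two commutators of unipotent matrices of index 2. -/

import Mathlib

open Matrix

variable {F : Type*} [Field F]

/-- A unipotent matrix of index 2: `A ≠ I` and `(A - I)² = 0`. -/
def IsU2 {m : Type*} [Fintype m] [DecidableEq m] (A : Matrix m m F) : Prop :=
  A ≠ 1 ∧ (A - 1) ^ 2 = 0

/-- A commutator `X * Y * X⁻¹ * Y⁻¹` of unipotent matrices of index 2. -/
def IsCommU2 {m : Type*} [Fintype m] [DecidableEq m] (A : Matrix m m F) : Prop :=
  ∃ X Y : Matrix m m F, IsU2 X ∧ IsU2 Y ∧ A = X * Y * X⁻¹ * Y⁻¹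

/-- `A` is a product of at most `k` commutators of unipotent matrices of index 2. -/
def IsProdCommU2 {m : Type*} [Fintype m] [DecidableEq m] (k : ℕ) (A : Matrix m m F) : Prop :=
  ∃ L : List (Matrix m m F), L.length ≤ k ∧ (∀ B ∈ L, IsCommU2 B) ∧ L.prod = A

/-- `A` is a product of at most `k` unipotent matrices of index 2. -/
def IsProdU2 {m : Type*} [Fintype m] [DecidableEq m] (k : ℕ) (A : Matrix m m F) : Prop :=
  ∃ L : List (Matrix m m F), L.length ≤ k ∧ (∀ B ∈ L, IsU2 B) ∧ L.prod = A

section Aux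

lemma u2_mul_inv {X : Matrix (Fin 2) (Fin 2) F} (h : (X - 1)^2 = 0) :
    X * (1 + 1 - X) = 1 := by
  have hx : X * (1 + 1 - X) = 1 - (X - 1)^2 := by noncomm_ring
  rw [hx, h, sub_zero]

lemma u2_isUnit_det {X : Matrix (Fin 2) (Fin 2) F} (h : (X - 1)^2 = 0) :
    IsUnit X.det := by
  have hd : X.det * (1 + 1 - X).det = 1 := by
    rw [← Matrix.det_mul, u2_mul_inv h, Matrix.det_one]
  exact IsUnit.of_mul_eq_one _ hd

lemma isU2_conj {P X : Matrix (Fin 2) (Fin 2) F} (hP : IsUnit P.det)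
    (h : IsU2 X) : IsU2 (P * X * P⁻¹) := by
  obtain ⟨hne, hsq⟩ := h
  constructor
  · intro hcon
    apply hne
    calc X = (P⁻¹ * P) * X * (P⁻¹ * P) := by
            rw [Matrix.nonsing_inv_mul P hP, one_mul, mul_one]
      _ = P⁻¹ * (P * X * P⁻¹) * P := by noncomm_ring
      _ = P⁻¹ * 1 * P := by rw [hcon]
      _ = 1 := by rw [mul_one, Matrix.nonsing_inv_mul P hP]
  · have h1 : P * X * P⁻¹ - 1 = P * (X - 1) * P⁻¹ := by
      rw [Matrix.mul_sub, Matrix.sub_mul, mul_one, Matrix.mul_nonsing_inv P hP]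
    rw [sq, h1]
    calc P * (X - 1) * P⁻¹ * (P * (X - 1) * P⁻¹)
        = P * ((X - 1) * (P⁻¹ * P) * (X - 1)) * P⁻¹ := by noncomm_ring
      _ = P * ((X - 1) * (X - 1)) * P⁻¹ := by
            rw [Matrix.nonsing_inv_mul P hP, mul_one]
      _ = 0 := by rw [← sq, hsq, mul_zero, zero_mul]

lemma isCommU2_conj {P A : Matrix (Fin 2) (Fin 2) F} (hP : IsUnit P.det)
    (h : IsCommU2 A) : IsCommU2 (P * A * P⁻¹) := by
  obtain ⟨X, Y, hX, hY, hA⟩ := h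
  refine ⟨P * X * P⁻¹, P * Y * P⁻¹, isU2_conj hP hX, isU2_conj hP hY, ?_⟩
  have hXinv : (P * X * P⁻¹)⁻¹ = P * X⁻¹ * P⁻¹ := by
    apply Matrix.inv_eq_right_inv
    calc P * X * P⁻¹ * (P * X⁻¹ * P⁻¹) = P * (X * (P⁻¹ * P) * X⁻¹) * P⁻¹ := by noncomm_ring
      _ = P * (X * X⁻¹) * P⁻¹ := by rw [Matrix.nonsing_inv_mul P hP, mul_one]
      _ = 1 := by rw [Matrix.mul_nonsing_inv X (u2_isUnit_det hX.2),
            mul_one, Matrix.mul_nonsing_inv P hP]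
  have hYinv : (P * Y * P⁻¹)⁻¹ = P * Y⁻¹ * P⁻¹ := by
    apply Matrix.inv_eq_right_inv
    calc P * Y * P⁻¹ * (P * Y⁻¹ * P⁻¹) = P * (Y * (P⁻¹ * P) * Y⁻¹) * P⁻¹ := by noncomm_ring
      _ = P * (Y * Y⁻¹) * P⁻¹ := by rw [Matrix.nonsing_inv_mul P hP, mul_one]
      _ = 1 := by rw [Matrix.mul_nonsing_inv Y (u2_isUnit_det hY.2),
            mul_one, Matrix.mul_nonsing_inv P hP]
  rw [hXinv, hYinv, hA]
  simp only [mul_assoc, Matrix.nonsing_inv_mul_cancel_left _ _ hP]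

/-- Any matrix with det 1, prescribed trace `t` and nonscalar is conjugate to the
companion matrix `!![0,-1;1,t]`. -/
lemma conj_companion (A : Matrix (Fin 2) (Fin 2) F) (t : F) (hdet : A.det = 1)
    (htr : A 0 0 + A 1 1 = t) (hns : ∀ c : F, A ≠ c • 1) :
    ∃ P : Matrix (Fin 2) (Fin 2) F, IsUnit P.det ∧ A = P * !![0, -1; 1, t] * P⁻¹ := by
  have hd2 : A 0 0 * A 1 1 - A 0 1 * A 1 0 = 1 := by
    rw [← Matrix.det_fin_two]; exact hdet
  -- general sub-step
  have key : ∀ p q : F, p * (A 1 0 * p + A 1 1 * q) - q * (A 0 0 * p + A 0 1 * q) ≠ 0 →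
      ∃ P : Matrix (Fin 2) (Fin 2) F, IsUnit P.det ∧ A = P * !![0, -1; 1, t] * P⁻¹ := by
    intro p q hpq
    set P : Matrix (Fin 2) (Fin 2) F :=
      !![p, A 0 0 * p + A 0 1 * q; q, A 1 0 * p + A 1 1 * q] with hPdef
    have hPdet : P.det = p * (A 1 0 * p + A 1 1 * q) - q * (A 0 0 * p + A 0 1 * q) := by
      rw [hPdef, Matrix.det_fin_two_of]; ring
    have hunit : IsUnit P.det := by rw [hPdet]; exact Ne.isUnit hpq
    refine ⟨P, hunit, ?_⟩
    have hmul : A * P = P * !![0, -1; 1, t] := by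
      ext i j
      fin_cases i <;> fin_cases j <;>
        simp [hPdef, Matrix.mul_apply, Fin.sum_univ_two]
      · linear_combination (-p) * hd2 + (A 0 0 * p + A 0 1 * q) * htr
      · linear_combination (-q) * hd2 + (A 1 0 * p + A 1 1 * q) * htr
    calc A = A * (P * P⁻¹) := by rw [Matrix.mul_nonsing_inv P hunit, mul_one]
      _ = (A * P) * P⁻¹ := by rw [mul_assoc]
      _ = P * !![0, -1; 1, t] * P⁻¹ := by rw [hmul]
  by_cases h10 : A 1 0 ≠ 0
  · exact key 1 0 (by simpa using h10)
  by_cases h01 : A 0 1 ≠ 0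
  · refine key 0 1 ?_
    simpa using h01
  -- diagonal case
  push_neg at h10 h01
  have hne : A 0 0 ≠ A 1 1 := by
    intro heq
    apply hns (A 0 0)
    ext i j
    fin_cases i <;> fin_cases j <;>
      simp [Matrix.smul_apply, Matrix.one_apply, h10, h01, heq]
  refine key 1 1 ?_
  intro hcon
  apply hne
  linear_combination -hcon - h01 + h10

end Aux

section Aux2
variable {F : Type*} [Field F]

/-- The basic commutator matrix. -/
lemma isCommU2_M (s : F) (hs : s ≠ 0) :
    IsCommU2 (!![1+s+s^2, -s^2; s, 1-s] : Matrix (Fin 2) (Fin 2) F) := by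
  refine ⟨!![1,s;0,1], !![1,0;1,1], ⟨?_, ?_⟩, ⟨?_, ?_⟩, ?_⟩
  · intro h
    have := congrFun (congrFun h 0) 1
    simp at this
    exact hs this
  · rw [sq]; ext i j
    fin_cases i <;> fin_cases j <;>
      simp [Matrix.mul_apply, Fin.sum_univ_two, Matrix.one_apply]
  · intro h
    have := congrFun (congrFun h 1) 0
    simp at this
  · rw [sq]; ext i j
    fin_cases i <;> fin_cases j <;>
      simp [Matrix.mul_apply, Fin.sum_univ_two, Matrix.one_apply]
  · have hX : (!![1,s;0,1] : Matrix (Fin 2) (Fin 2) F)⁻¹ = !![1,-s;0,1] := by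
      apply Matrix.inv_eq_right_inv
      ext i j
      fin_cases i <;> fin_cases j <;>
        simp [Matrix.mul_apply, Fin.sum_univ_two, Matrix.one_apply]
    have hY : (!![1,0;1,1] : Matrix (Fin 2) (Fin 2) F)⁻¹ = !![1,0;-1,1] := by
      apply Matrix.inv_eq_right_inv
      ext i j
      fin_cases i <;> fin_cases j <;>
        simp [Matrix.mul_apply, Fin.sum_univ_two, Matrix.one_apply]
    rw [hX, hY]
    ext i j
    fin_cases i <;> fin_cases j <;>
      simp [Matrix.mul_apply, Fin.sum_univ_two] <;> ring

/-- Every nonscalar determinant-one matrix whose trace is `2 + s²` with `s ≠ 0`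
is a commutator of two U2 matrices. -/
lemma isCommU2_of (A : Matrix (Fin 2) (Fin 2) F) (s : F) (hs : s ≠ 0)
    (hdet : A.det = 1) (htr : A 0 0 + A 1 1 = 2 + s^2) (hns : ∀ c : F, A ≠ c • 1) :
    IsCommU2 A := by
  obtain ⟨P, hP, hPA⟩ := conj_companion A (2 + s^2) hdet htr hns
  set M : Matrix (Fin 2) (Fin 2) F := !![1+s+s^2, -s^2; s, 1-s] with hMdef
  have hMdet : M.det = 1 := by
    rw [hMdef, Matrix.det_fin_two_of]; ring
  have hMtr : M 0 0 + M 1 1 = 2 + s^2 := by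
    rw [hMdef]; simp; ring
  have hMns : ∀ c : F, M ≠ c • 1 := by
    intro c h
    have := congrFun (congrFun h 1) 0
    rw [hMdef] at this
    simp [Matrix.smul_apply, Matrix.one_apply] at this
    exact hs this
  obtain ⟨Q, hQ, hQM⟩ := conj_companion M (2 + s^2) hMdet hMtr hMns
  -- A = (P * Q⁻¹) * M * (P * Q⁻¹)⁻¹
  have hQinvdet : IsUnit (Q⁻¹).det := Q.isUnit_nonsing_inv_det hQ
  have hRdet : IsUnit (P * Q⁻¹).det := by
    rw [Matrix.det_mul]
    exact hP.mul hQinvdet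
  have hA' : A = (P * Q⁻¹) * M * (P * Q⁻¹)⁻¹ := by
    have hRinv : (P * Q⁻¹)⁻¹ = Q * P⁻¹ := by
      apply Matrix.inv_eq_right_inv
      calc P * Q⁻¹ * (Q * P⁻¹) = P * (Q⁻¹ * (Q * P⁻¹)) := by rw [mul_assoc]
        _ = P * P⁻¹ := by rw [Matrix.nonsing_inv_mul_cancel_left _ _ hQ]
        _ = 1 := Matrix.mul_nonsing_inv P hP
    rw [hRinv, hQM] at *
    rw [hPA]
    simp only [mul_assoc, Matrix.nonsing_inv_mul_cancel_left _ _ hQ]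
  rw [hA']
  exact isCommU2_conj hRdet (isCommU2_M s hs)

end Aux2

section Aux3
variable {F : Type*} [Field F]

lemma exists_ne_three (hF : 4 ≤ Cardinal.mk F) (x y z : F) :
    ∃ w : F, w ≠ x ∧ w ≠ y ∧ w ≠ z := by
  by_contra h
  push_neg at h
  have hsub : (Set.univ : Set F) ⊆ {x, y, z} := by
    intro w _
    simp only [Set.mem_insert_iff, Set.mem_singleton_iff]
    by_contra hw
    push_neg at hw
    exact hw.2.2 (h w hw.1 hw.2.1)
  have h1 : Cardinal.mk F ≤ 3 := by
    have e1 : Cardinal.mk F = Cardinal.mk (Set.univ : Set F) := (Cardinal.mk_univ (α := F)).symm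
    rw [e1]
    calc Cardinal.mk (Set.univ : Set F) ≤ Cardinal.mk ({x, y, z} : Set F) :=
          Cardinal.mk_le_mk_of_subset hsub
      _ ≤ Cardinal.mk ({y, z} : Set F) + 1 := Cardinal.mk_insert_le
      _ ≤ (Cardinal.mk ({z} : Set F) + 1) + 1 := by gcongr; exact Cardinal.mk_insert_le
      _ = 3 := by rw [Cardinal.mk_singleton]; norm_num
  have : (4 : Cardinal) ≤ 3 := hF.trans h1
  norm_num at this

lemma exists_params (hF : 4 ≤ Cardinal.mk F) (t : F) :
    ∃ a s σ : F, a ≠ 0 ∧ s ≠ 0 ∧ σ ≠ 0 ∧ σ^2 + 4 = a * (2 + s^2 + t - a) := by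
  by_cases h2 : (2 : F) = 0
  · -- characteristic 2
    obtain ⟨m, hm0, hm1, -⟩ := exists_ne_three hF 0 1 1
    have hsqinj : ∀ u v : F, u^2 = v^2 → u = v := by
      intro u v huv
      have h1 : (u - v)^2 = 0 := by linear_combination huv + (v^2 - u*v) * h2
      have h1' : u - v = 0 := (pow_eq_zero_iff (by norm_num : (2:ℕ) ≠ 0)).mp h1
      linear_combination h1'
    obtain ⟨s, hs0, hst⟩ : ∃ s : F, s ≠ 0 ∧ s^2 ≠ t := by
      by_cases h1t : (1:F)^2 = t
      · exact ⟨m, hm0, fun hmt => hm1 (hsqinj m 1 (hmt.trans h1t.symm))⟩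
      · exact ⟨1, one_ne_zero, h1t⟩
    have hm1' : (m + 1 : F) ≠ 0 := by
      intro h
      exact hm1 (by linear_combination h - h2)
    have hden : ((m+1)^2 : F) ≠ 0 := pow_ne_zero 2 hm1'
    have hnum : (s^2 + t : F) ≠ 0 := by
      intro h
      exact hst (by linear_combination h - t * h2)
    obtain ⟨a, ha⟩ : ∃ a : F, (m+1)^2 * a = s^2 + t :=
      ⟨(s^2 + t)/(m+1)^2, by field_simp⟩
    have ha0 : a ≠ 0 := by
      intro h
      rw [h, mul_zero] at ha
      exact hnum ha.symm
    exact ⟨a, s, a * m, ha0, hs0, mul_ne_zero ha0 hm0,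
      by linear_combination (-a) * ha + (a^2*m^2 + a^2*m + a^2 + 2 - a - a*s^2 - a*t) * h2⟩
  · -- characteristic ≠ 2
    by_cases h4 : ∃ σ₀ : F, σ₀^2 = -4
    · obtain ⟨σ₀, hσ₀⟩ := h4
      have hσ₀0 : σ₀ ≠ 0 := by
        intro h
        have h4' : (2:F) * 2 = 0 := by linear_combination hσ₀ - σ₀ * h
        rcases mul_eq_zero.mp h4' with h' | h' <;> exact h2 h'
      obtain ⟨s, hs0, hsa⟩ : ∃ s : F, s ≠ 0 ∧ 2 + s^2 + t ≠ 0 := by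
        by_cases h3t : 2 + (1:F)^2 + t = 0
        · obtain ⟨k, hk0, hk1, hkm1⟩ := exists_ne_three hF 0 1 (-1)
          refine ⟨k, hk0, fun hcon => ?_⟩
          have hk2 : (k - 1) * (k + 1) = 0 := by linear_combination hcon - h3t
          rcases mul_eq_zero.mp hk2 with h' | h'
          · exact hk1 (by linear_combination h')
          · exact hkm1 (by linear_combination h')
        · exact ⟨1, one_ne_zero, h3t⟩
      exact ⟨2 + s^2 + t, s, σ₀, hsa, hs0, hσ₀0, by linear_combination hσ₀⟩
    · push_neg at h4
      obtain ⟨e, he0, hec, henc⟩ :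
          ∃ e : F, e ≠ 0 ∧ e^2 ≠ t - 3 ∧ e^2 ≠ -(t - 3) := by
        by_cases hf : ∃ f : F, f^2 = t - 3
        · obtain ⟨f, hfc⟩ := hf
          obtain ⟨e, he0, hef, henf⟩ := exists_ne_three hF 0 f (-f)
          refine ⟨e, he0, ?_, ?_⟩
          · intro hcon
            have h' : (e - f) * (e + f) = 0 := by linear_combination hcon - hfc
            rcases mul_eq_zero.mp h' with h'' | h''
            · exact hef (by linear_combination h'')
            · exact henf (by linear_combination h'')
          · intro hcon
            apply he0
            by_cases hf0 : f = 0
            · have : e^2 = 0 := by linear_combination hcon + hfc - f * hf0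
              exact (pow_eq_zero_iff (by norm_num : (2:ℕ) ≠ 0)).mp this
            · exfalso
              apply h4 (2 * f / e)
              rw [div_pow, div_eq_iff (pow_ne_zero 2 he0)]
              linear_combination 4 * hfc + 4 * hcon
        · by_cases hg : ∃ g : F, g^2 = -(t - 3)
          · obtain ⟨g, hgc⟩ := hg
            obtain ⟨e, he0, heg, heng⟩ := exists_ne_three hF 0 g (-g)
            refine ⟨e, he0, fun hcon => hf ⟨e, hcon⟩, ?_⟩
            intro hcon
            have h' : (e - g) * (e + g) = 0 := by linear_combination hcon - hgc
            rcases mul_eq_zero.mp h' with h'' | h''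
            · exact heg (by linear_combination h'')
            · exact heng (by linear_combination h'')
          · exact ⟨1, one_ne_zero, fun hcon => hf ⟨1, hcon⟩, fun hcon => hg ⟨1, hcon⟩⟩
      have h2e : (2:F) * e ≠ 0 := mul_ne_zero h2 he0
      refine ⟨1, (t - 3 - e^2)/(2*e), (e^2 + (t - 3))/(2*e), one_ne_zero, ?_, ?_, ?_⟩
      · refine div_ne_zero ?_ h2e
        intro h
        exact hec (by linear_combination -h)
      · refine div_ne_zero ?_ h2e
        intro h
        exact henc (by linear_combination h)
      · field_simp
        ring
end Aux3

theorem stmt10 {F : Type*} [Field F] (hF : 4 ≤ Cardinal.mk F)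
    (A : Matrix (Fin 2) (Fin 2) F) (hA : A.det = 1) (hns : ∀ c : F, A ≠ c • 1) :
    IsProdCommU2 2 A := by
  obtain ⟨a, s, σ, ha, hs, hσ, heq⟩ := exists_params hF (A 0 0 + A 1 1)
  set t : F := A 0 0 + A 1 1 with htdef
  set B : Matrix (Fin 2) (Fin 2) F :=
    !![a, 1; a*(2+s^2-a) - 1, 2+s^2-a] with hBdef
  set C : Matrix (Fin 2) (Fin 2) F :=
    !![-1, -(2+s^2-a) - t; a, (a*(2+s^2-a) - 1) + a*t] with hCdef
  have hBC : B * C = !![0, -1; 1, t] := by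
    ext i j
    fin_cases i <;> fin_cases j <;>
      simp [hBdef, hCdef, Matrix.mul_apply, Fin.sum_univ_two] <;> ring
  have hBcomm : IsCommU2 B := by
    refine isCommU2_of B s hs ?_ ?_ ?_
    · rw [hBdef, Matrix.det_fin_two_of]; ring
    · rw [hBdef]
      show a + (2+s^2-a) = 2 + s^2
      ring
    · intro c hcon
      have h01 := congrFun (congrFun hcon 0) 1
      rw [hBdef] at h01
      simp [Matrix.smul_apply, Matrix.one_apply] at h01
  have hCcomm : IsCommU2 C := by
    refine isCommU2_of C σ hσ ?_ ?_ ?_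
    · rw [hCdef, Matrix.det_fin_two_of]; ring
    · rw [hCdef]
      show (-1) + ((a*(2+s^2-a) - 1) + a*t) = 2 + σ^2
      linear_combination -heq
    · intro c hcon
      have h10 := congrFun (congrFun hcon 1) 0
      rw [hCdef] at h10
      simp [Matrix.smul_apply, Matrix.one_apply] at h10
      exact ha h10
  obtain ⟨P, hP, hPA⟩ := conj_companion A t hA htdef.symm hns
  refine ⟨[P * B * P⁻¹, P * C * P⁻¹], by norm_num, ?_, ?_⟩
  · intro X hX
    simp only [List.mem_cons, List.mem_singleton, List.not_mem_nil, or_false] at hX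
    rcases hX with rfl | rfl
    · exact isCommU2_conj hP hBcomm
    · exact isCommU2_conj hP hCcomm
  · show (P * B * P⁻¹) * ((P * C * P⁻¹) * 1) = A
    rw [mul_one, hPA, ← hBC]
    simp only [mul_assoc, Matrix.nonsing_inv_mul_cancel_left _ _ hP]
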